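/- arXiv:2311.06189 — 3 statements merged into one kernel-verified Lean document; each statement's English description precedes it below -/
import Mathlib

section
/- The ReLU operator R(x) = max(x, 0) is a Rota–Baxter operator of weight +1 on the max-plus semiring (ℝ ∪ {−∞}, max, +); that is, for all x, y in ℝ ∪ {−∞}, max(x,0) + max(y,0) = max( max(max(x,0)+y, 0), max(x+max(y,0), 0), max(x+y, 0) ). -/
/-- The ReLU operator `R(x) = max x 0` is a Rota–Baxter operator of weight `+1`
on the max-plus (tropical) semiring `ℝ ∪ {−∞}` with addition `max` and
multiplication `+`. -/
theorem relu_rotaBaxter_weight_one :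
    ∀ x y : WithBot ℝ,
      max x 0 + max y 0 =
        max (max (x + max y 0) 0) (max (max (max x 0 + y) 0) (max (x + y) 0)) := by
  intro x y
  induction x using WithBot.recBotCoe with
  | bot =>
    induction y using WithBot.recBotCoe with
    | bot => simp
    | coe b =>
      simp only [WithBot.bot_add, max_bot_left]
      rcases le_total (b : WithBot ℝ) 0 with h | h <;> simp_all [max_eq_left, max_eq_right]
  | coe a =>
    induction y using WithBot.recBotCoe with
    | bot =>
      simp only [WithBot.add_bot, max_bot_left]
      rcases le_total (a : WithBot ℝ) 0 with h | h <;> simp_all [max_eq_left, max_eq_right]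
    | coe b =>
      have h0 : (0 : WithBot ℝ) = ((0 : ℝ) : WithBot ℝ) := rfl
      rw [h0]
      simp only [← WithBot.coe_max, ← WithBot.coe_add, WithBot.coe_eq_coe]
      rcases le_total a 0 with ha | ha <;> rcases le_total b 0 with hb | hb <;>
        rcases le_total (a + b) 0 with hab | hab <;>
        simp [max_eq_left, max_eq_right, ha, hb, hab, add_nonneg, add_nonpos]
end

section
/- For every λ ∈ [0,1], the threshold operator c_λ on the semiring ([0,1], max, ·), defined by c_λ(x) = x if x < λ and c_λ(x) = 1 if x ≥ λ, is a Rota–Baxter operator of weight −1: for all x, y ∈ [0,1], max( c_λ(x)·c_λ(y), c_λ(x·y) ) = max( c_λ(c_λ(x)·y), c_λ(x·c_λ(y)) ). -/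
/-- For every `λ ∈ [0,1]`, the threshold operator `c_λ` on the semiring
`([0,1], max, ·)`, given by `c_λ x = x` if `x < λ` and `c_λ x = 1` if `x ≥ λ`,
is a Rota–Baxter operator of weight `−1`:
`max (c_λ x * c_λ y) (c_λ (x*y)) = max (c_λ (c_λ x * y)) (c_λ (x * c_λ y))`. -/
theorem threshold_rotaBaxter_weight_neg_one :
    ∀ lam ∈ Set.Icc (0 : ℝ) 1, ∀ x ∈ Set.Icc (0 : ℝ) 1, ∀ y ∈ Set.Icc (0 : ℝ) 1,
      (fun z : ℝ => if z < lam then z else 1) x * (fun z : ℝ => if z < lam then z else 1) y ⊔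
          (fun z : ℝ => if z < lam then z else 1) (x * y) =
        (fun z : ℝ => if z < lam then z else 1) ((fun z : ℝ => if z < lam then z else 1) x * y) ⊔
          (fun z : ℝ => if z < lam then z else 1) (x * (fun z : ℝ => if z < lam then z else 1) y) := by
  rintro lam ⟨hl0, hl1⟩ x ⟨hx0, hx1⟩ y ⟨hy0, hy1⟩
  simp only
  rcases lt_or_ge x lam with hx | hx <;> rcases lt_or_ge y lam with hy | hy
  · have hxy : x * y < lam := lt_of_le_of_lt (by nlinarith) hx
    simp [if_pos hx, if_pos hy, if_pos hxy]
  · simp only [if_pos hx, if_neg (not_lt.2 hy), mul_one, one_mul, mul_comm]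
    rw [sup_comm]
  · simp only [if_pos hy, if_neg (not_lt.2 hx), mul_one, one_mul, mul_comm]
  · simp only [if_neg (not_lt.2 hx), if_neg (not_lt.2 hy), mul_one, one_mul, sup_idem]
    exact sup_eq_left.2 (by split_ifs with h; exacts [le_of_lt (h.trans_le hl1), le_refl 1])
end

section
/- Let H be a graded connected commutative bialgebra and (A, R) a commutative Rota–Baxter algebra of weight −1 with R(1) = 0. Let φ : H → A be an algebra homomorphism, and define φ₋ and φ₊ by the Bogolyubov recursion φ₋(x) = −R(φ̃(x)), φ₊(x) = (1−R)(φ̃(x)) with φ̃(x) = φ(x) + Σ φ₋(x′)φ(x″). Then φ₋ and φ₊ are both algebra homomorphisms (multiplicative maps). -/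
open scoped TensorProduct

theorem birkhoff_aux_comul
    {k : Type*} [Field k]
    {H : Type*} [CommRing H] [Bialgebra k H]
    (ℳ : ℕ → Submodule k H) [GradedAlgebra ℳ]
    (hconn : ℳ 0 = Submodule.span k {1})
    (hcomul_graded : ∀ n : ℕ, ∀ x ∈ ℳ n,
      CoalgebraStruct.comul (R := k) x ∈
        ⨆ (p : ℕ × ℕ) (_ : p.1 + p.2 = n),
          LinearMap.range (TensorProduct.map (ℳ p.1).subtype (ℳ p.2).subtype))
    (n : ℕ) (hn : 1 ≤ n) (x : H) (hx : x ∈ ℳ n) :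
    CoalgebraStruct.comul (R := k) x - x ⊗ₜ[k] (1 : H) ∈
      LinearMap.range (TensorProduct.map (⨆ i : Fin n, ℳ i.val).subtype
        (LinearMap.id (R := k) (M := H))) := by
  classical
  set P : Submodule k H := ⨆ i : Fin n, ℳ i.val with hP
  set W : Submodule k (H ⊗[k] H) :=
    LinearMap.range (TensorProduct.map P.subtype (LinearMap.id (R := k) (M := H))) with hWdef
  set j : H →ₗ[k] H ⊗[k] H := (TensorProduct.mk k H H).flip 1 with hj
  have hjz : ∀ z : H, j z = z ⊗ₜ[k] (1 : H) := fun z => rfl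
  -- the graded pieces with first degree < n land in W
  have hW : ∀ p q : ℕ, p < n →
      LinearMap.range (TensorProduct.map (ℳ p).subtype (ℳ q).subtype) ≤ W := by
    intro p q hp
    rw [TensorProduct.range_map_eq_span_tmul, Submodule.span_le]
    rintro _ ⟨u, v, rfl⟩
    exact ⟨(⟨(u : H), le_iSup (fun i : Fin n => ℳ i.val) ⟨p, hp⟩ u.2⟩ :
      P) ⊗ₜ[k] (v : H), rfl⟩
  -- the piece with first degree = n lands in (ℳ n).map j
  have hQ : LinearMap.range (TensorProduct.map (ℳ n).subtype (ℳ 0).subtype) ≤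
      (ℳ n).map j := by
    rw [TensorProduct.range_map_eq_span_tmul, Submodule.span_le]
    rintro _ ⟨u, v, rfl⟩
    have hv : (v : H) ∈ Submodule.span k {(1 : H)} := hconn ▸ v.2
    obtain ⟨c, hc⟩ := Submodule.mem_span_singleton.mp hv
    refine ⟨c • (u : H), Submodule.smul_mem _ _ u.2, ?_⟩
    simp only [Submodule.subtype_apply]
    rw [hjz, ← hc]
    exact TensorProduct.smul_tmul c _ _
  have hmem : CoalgebraStruct.comul (R := k) x ∈ (ℳ n).map j ⊔ W := by
    have hle : (⨆ (p : ℕ × ℕ) (_ : p.1 + p.2 = n),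
        LinearMap.range (TensorProduct.map (ℳ p.1).subtype (ℳ p.2).subtype)) ≤
        (ℳ n).map j ⊔ W := by
      refine iSup_le fun p => iSup_le fun hpq => ?_
      rcases lt_or_ge p.1 n with h | h
      · exact (hW p.1 p.2 h).trans le_sup_right
      · have h1 : p.1 = n := le_antisymm (hpq ▸ Nat.le_add_right _ _) h
        have h2 : p.2 = 0 := by omega
        obtain ⟨p1, p2⟩ := p
        simp only at h1 h2
        subst h1; subst h2
        exact hQ.trans le_sup_left
    exact hle (hcomul_graded n x hx)
  obtain ⟨w', hw', r, hr, hsum⟩ := Submodule.mem_sup.mp hmem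
  obtain ⟨w, hw, rfl⟩ := hw'
  -- apply (id ⊗ counit)
  set L : H ⊗[k] H →ₗ[k] H :=
    (TensorProduct.rid k H).toLinearMap ∘ₗ
      LinearMap.lTensor H (Coalgebra.counit (R := k) (A := H)) with hL
  have hLtmul : ∀ (u v : H), L (u ⊗ₜ[k] v) = Coalgebra.counit (R := k) v • u := by
    intro u v; simp [hL, TensorProduct.rid_tmul]
  have hLcomul : L (CoalgebraStruct.comul (R := k) x) = x := by
    simp [hL, Coalgebra.lTensor_counit_comul, TensorProduct.rid_tmul]
  have hLj : ∀ z : H, L (j z) = z := by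
    intro z
    rw [hjz, hLtmul, Bialgebra.counit_one, one_smul]
  have hLr : L r ∈ P := by
    obtain ⟨t, ht⟩ := hr
    have key : ∀ s : ↥P ⊗[k] H,
        L ((TensorProduct.map P.subtype (LinearMap.id (R := k) (M := H))) s) ∈ P := by
      intro s
      induction s using TensorProduct.induction_on with
      | zero => simp
      | tmul u v =>
          rw [TensorProduct.map_tmul, hLtmul]
          exact P.smul_mem _ u.2
      | add s t hs ht => rw [map_add, map_add]; exact P.add_mem hs ht
    rw [← ht]; exact key t
  have hxw : x - w ∈ P := by
    have : x = w + L r := by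
      rw [← hLcomul, ← hsum, map_add, hLj]
    rw [this]; simpa using hLr
  have hPdisj : Disjoint (ℳ n) P := by
    have hind : iSupIndep ℳ :=
      (DirectSum.Decomposition.isInternal ℳ).submodule_iSupIndep
    refine (iSupIndep_def.mp hind n).mono_right ?_
    refine iSup_le fun i => ?_
    exact le_iSup_of_le i.val (le_iSup_of_le (Nat.ne_of_lt i.2) le_rfl)
  have hxw0 : x - w = 0 :=
    Submodule.disjoint_def.mp hPdisj _ (Submodule.sub_mem _ hx hw) hxw
  have hwx : w = x := by linear_combination (norm := abel) -hxw0
  rw [← hsum, hwx, hjz]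
  simpa using hr

/-- Connes–Kreimer Birkhoff factorization: for a graded connected commutative
bialgebra `H` over a field `k` (grading `ℳ` with `ℳ 0 = span {1}`, the
coproduct respecting the grading), a commutative Rota–Baxter algebra `(A, R)`
of weight `−1` with `R 1 = 0`, and an algebra homomorphism `φ : H → A`, the
maps `φ₋`, `φ₊` defined by the Bogolyubov recursion
`φ₋ x = −R(φ̃ x)`, `φ₊ x = (1−R)(φ̃ x)`, where
`φ̃ x = φ x + (mult) ∘ (φ₋ ⊗ φ) (Δ x − x ⊗ 1 − 1 ⊗ x)`,
are both multiplicative. -/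
theorem birkhoff_factors_are_multiplicative
    {k : Type*} [Field k]
    {H : Type*} [CommRing H] [Bialgebra k H]
    (ℳ : ℕ → Submodule k H) [GradedAlgebra ℳ]
    (hconn : ℳ 0 = Submodule.span k {1})
    (hcomul_graded : ∀ n : ℕ, ∀ x ∈ ℳ n,
      CoalgebraStruct.comul (R := k) x ∈
        ⨆ (p : ℕ × ℕ) (_ : p.1 + p.2 = n),
          LinearMap.range (TensorProduct.map (ℳ p.1).subtype (ℳ p.2).subtype))
    {A : Type*} [CommRing A] [Algebra k A]
    (R : A →ₗ[k] A)
    (hRB : ∀ a b : A, R a * R b = R (a * R b) + R (R a * b) - R (a * b))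
    (hR1 : R 1 = 0)
    (φ : H →ₐ[k] A) (φm φp : H →ₗ[k] A)
    (hφm1 : φm 1 = 1) (hφp1 : φp 1 = 1)
    (hm : ∀ n : ℕ, 1 ≤ n → ∀ x ∈ ℳ n,
      φm x = - R (φ x + (LinearMap.mul' k A)
        ((TensorProduct.map φm φ.toLinearMap)
          (CoalgebraStruct.comul (R := k) x - x ⊗ₜ[k] (1 : H) - (1 : H) ⊗ₜ[k] x))))
    (hp : ∀ n : ℕ, 1 ≤ n → ∀ x ∈ ℳ n,
      φp x = (φ x + (LinearMap.mul' k A)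
        ((TensorProduct.map φm φ.toLinearMap)
          (CoalgebraStruct.comul (R := k) x - x ⊗ₜ[k] (1 : H) - (1 : H) ⊗ₜ[k] x)))
        - R (φ x + (LinearMap.mul' k A)
        ((TensorProduct.map φm φ.toLinearMap)
          (CoalgebraStruct.comul (R := k) x - x ⊗ₜ[k] (1 : H) - (1 : H) ⊗ₜ[k] x)))) :
    (∀ x y : H, φm (x * y) = φm x * φm y) ∧ (∀ x y : H, φp (x * y) = φp x * φp y) := by
  classical
  set F : H ⊗[k] H →ₗ[k] A :=
    (LinearMap.mul' k A) ∘ₗ (TensorProduct.map φm φ.toLinearMap) with hFdef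
  have hFtmul : ∀ u v : H, F (u ⊗ₜ[k] v) = φm u * φ v := by
    intro u v
    simp [hFdef, LinearMap.mul'_apply]
  set Φ : H →ₗ[k] A := F ∘ₗ (CoalgebraStruct.comul (R := k) (A := H)) with hΦdef
  have hΦ : ∀ z : H, Φ z = F (CoalgebraStruct.comul (R := k) z) := fun _ => rfl
  -- rewrite the recursions
  have hexp : ∀ x : H, φ x + (LinearMap.mul' k A)
      ((TensorProduct.map φm φ.toLinearMap)
        (CoalgebraStruct.comul (R := k) x - x ⊗ₜ[k] (1 : H) - (1 : H) ⊗ₜ[k] x))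
      = Φ x - φm x := by
    intro x
    have h1 : (LinearMap.mul' k A) ((TensorProduct.map φm φ.toLinearMap)
        (CoalgebraStruct.comul (R := k) x - x ⊗ₜ[k] (1 : H) - (1 : H) ⊗ₜ[k] x))
        = F (CoalgebraStruct.comul (R := k) x) - F (x ⊗ₜ[k] (1 : H))
          - F ((1 : H) ⊗ₜ[k] x) := by
      simp only [hFdef, LinearMap.comp_apply, map_sub]
    rw [h1, hFtmul, hFtmul, hφm1, map_one, ← hΦ x]
    ring
  have hm' : ∀ n : ℕ, 1 ≤ n → ∀ x ∈ ℳ n, φm x = - R (Φ x - φm x) := by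
    intro n hn x hx
    conv_lhs => rw [hm n hn x hx]
    rw [hexp x]
  have hp' : ∀ n : ℕ, 1 ≤ n → ∀ x ∈ ℳ n, φp x = Φ x := by
    intro n hn x hx
    rw [hp n hn x hx, hexp x]
    linear_combination - hm' n hn x hx
  -- bilinear defect maps
  set D : H →ₗ[k] H →ₗ[k] A :=
    (LinearMap.mul k H).compr₂ φm - (LinearMap.mul k A).compl₁₂ φm φm with hDdef
  have hD : ∀ x y : H, D x y = φm (x * y) - φm x * φm y := by
    intro x y
    simp only [hDdef, LinearMap.sub_apply, LinearMap.compr₂_apply, LinearMap.compl₁₂_apply, LinearMap.mul_apply']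
  set B : (H ⊗[k] H) →ₗ[k] (H ⊗[k] H) →ₗ[k] A :=
    (LinearMap.mul k (H ⊗[k] H)).compr₂ F - (LinearMap.mul k A).compl₁₂ F F with hBdef
  have hB : ∀ s t : H ⊗[k] H, B s t = F (s * t) - F s * F t := by
    intro s t
    simp only [hBdef, LinearMap.sub_apply, LinearMap.compr₂_apply, LinearMap.compl₁₂_apply, LinearMap.mul_apply']
  have hBtmul : ∀ a b c d : H,
      B (a ⊗ₜ[k] b) (c ⊗ₜ[k] d) = D a c * φ (b * d) := by
    intro a b c d
    rw [hB, Algebra.TensorProduct.tmul_mul_tmul, hFtmul, hFtmul, hFtmul, hD, map_mul φ b d]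
    ring
  have hD1r : ∀ u : H, D u 1 = 0 := by
    intro u; rw [hD, mul_one, hφm1, mul_one, sub_self]
  -- the main induction: φm is multiplicative on homogeneous elements
  have main : ∀ n : ℕ, ∀ a b : ℕ, a + b = n → ∀ x ∈ ℳ a, ∀ y ∈ ℳ b, D x y = 0 := by
    intro n
    induction n using Nat.strong_induction_on with
    | _ n IH =>
    intro a b hab x hx y hy
    rcases Nat.eq_zero_or_pos a with ha0 | ha
    · subst ha0
      obtain ⟨c, hc⟩ := Submodule.mem_span_singleton.mp (hconn ▸ hx)
      have hD1l : ∀ v : H, D 1 v = 0 := by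
        intro v; rw [hD, one_mul, hφm1, one_mul, sub_self]
      rw [← hc, LinearMap.map_smul₂, hD1l, smul_zero]
    rcases Nat.eq_zero_or_pos b with hb0 | hb
    · subst hb0
      obtain ⟨c, hc⟩ := Submodule.mem_span_singleton.mp (hconn ▸ hy)
      rw [← hc, map_smul, hD1r, smul_zero]
    -- main case : a ≥ 1 and b ≥ 1
    have IH' : ∀ p q : ℕ, p + q < n → ∀ u ∈ ℳ p, ∀ v ∈ ℳ q, D u v = 0 := by
      intro p q h u hu v hv
      exact IH (p + q) h p q rfl u hu v hv
    set Pa : Submodule k H := ⨆ i : Fin a, ℳ i.val with hPa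
    set Pb : Submodule k H := ⨆ i : Fin b, ℳ i.val with hPb
    obtain ⟨tx, htx⟩ := birkhoff_aux_comul ℳ hconn hcomul_graded a ha x hx
    obtain ⟨ty, hty⟩ := birkhoff_aux_comul ℳ hconn hcomul_graded b hb y hy
    have hcx : CoalgebraStruct.comul (R := k) x
        = x ⊗ₜ[k] (1 : H) + (TensorProduct.map Pa.subtype (LinearMap.id (R := k) (M := H))) tx := by
      rw [htx]; abel
    have hcy : CoalgebraStruct.comul (R := k) y
        = y ⊗ₜ[k] (1 : H) + (TensorProduct.map Pb.subtype (LinearMap.id (R := k) (M := H))) ty := by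
      rw [hty]; abel
    -- vanishing of D against lower-degree pieces
    have hDxPb : ∀ u ∈ Pb, D x u = 0 := by
      intro u hu
      refine Submodule.iSup_induction (motive := fun z => D x z = 0)
        (fun i : Fin b => ℳ i.val) hu ?_ (by simp) ?_
      · intro i v hv
        exact IH' a i.val (by have := i.2; omega) x hx v hv
      · intro v w hv hw
        rw [map_add, hv, hw, add_zero]
    have hDPay : ∀ u ∈ Pa, D u y = 0 := by
      intro u hu
      refine Submodule.iSup_induction (motive := fun z => D z y = 0)
        (fun i : Fin a => ℳ i.val) hu ?_ (by simp) ?_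
      · intro i v hv
        exact IH' i.val b (by have := i.2; omega) v hv y hy
      · intro v w hv hw
        rw [LinearMap.map_add₂, hv, hw, add_zero]
    have hDPP : ∀ u ∈ Pa, ∀ v ∈ Pb, D u v = 0 := by
      intro u hu
      refine Submodule.iSup_induction (motive := fun z => ∀ v ∈ Pb, D z v = 0)
        (fun i : Fin a => ℳ i.val) hu ?_ (by simp) ?_
      · intro i u hui v hv
        refine Submodule.iSup_induction (motive := fun w => D u w = 0)
          (fun j : Fin b => ℳ j.val) hv ?_ (by simp) ?_
        · intro j w hw
          exact IH' i.val j.val (by have := i.2; have := j.2; omega) u hui w hw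
        · intro v w hv hw
          rw [map_add, hv, hw, add_zero]
      · intro v w hv hw s hs
        rw [LinearMap.map_add₂, hv _ hs, hw _ hs, add_zero]
    -- the four pieces of B (comul x) (comul y)
    have C1 : ∀ s : ↥Pb ⊗[k] H,
        B (x ⊗ₜ[k] (1 : H)) ((TensorProduct.map Pb.subtype (LinearMap.id (R := k) (M := H))) s) = 0 := by
      intro s
      induction s using TensorProduct.induction_on with
      | zero => simp
      | tmul c d =>
          rw [TensorProduct.map_tmul, Submodule.subtype_apply, LinearMap.id_apply,
            hBtmul, hDxPb _ c.2, zero_mul]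
      | add s t hs ht => rw [map_add, map_add, hs, ht, add_zero]
    have C2 : ∀ t : ↥Pa ⊗[k] H,
        B ((TensorProduct.map Pa.subtype (LinearMap.id (R := k) (M := H))) t) (y ⊗ₜ[k] (1 : H)) = 0 := by
      intro t
      induction t using TensorProduct.induction_on with
      | zero => simp
      | tmul u d =>
          rw [TensorProduct.map_tmul, Submodule.subtype_apply, LinearMap.id_apply,
            hBtmul, hDPay _ u.2, zero_mul]
      | add s t hs ht => rw [map_add, LinearMap.map_add₂, hs, ht, add_zero]
    have C3 : ∀ t : ↥Pa ⊗[k] H, ∀ s : ↥Pb ⊗[k] H,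
        B ((TensorProduct.map Pa.subtype (LinearMap.id (R := k) (M := H))) t)
          ((TensorProduct.map Pb.subtype (LinearMap.id (R := k) (M := H))) s) = 0 := by
      intro t
      induction t using TensorProduct.induction_on with
      | zero => intro s; simp
      | tmul u d =>
          intro s
          induction s using TensorProduct.induction_on with
          | zero => simp
          | tmul c e =>
              rw [TensorProduct.map_tmul, TensorProduct.map_tmul,
                Submodule.subtype_apply, Submodule.subtype_apply,
                LinearMap.id_apply, LinearMap.id_apply,
                hBtmul, hDPP _ u.2 _ c.2, zero_mul]
          | add s t hs ht => rw [map_add, map_add, hs, ht, add_zero]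
      | add t t' hs ht =>
          intro s
          rw [map_add, LinearMap.map_add₂, hs s, ht s, add_zero]
    have hBxy : B (CoalgebraStruct.comul (R := k) x) (CoalgebraStruct.comul (R := k) y)
        = D x y := by
      rw [hcx, hcy, LinearMap.map_add₂, map_add, map_add,
        C1 ty, C2 tx, C3 tx ty, hBtmul]
      simp only [one_mul, map_one, mul_one, add_zero, zero_add]
    -- key identity (1)
    have key1 : Φ (x * y) - Φ x * Φ y = D x y := by
      rw [hΦ, hΦ, hΦ, Bialgebra.comul_mul, ← hBxy, hB]
    -- homogeneity of the product
    have hxy : x * y ∈ ℳ n := by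
      have := SetLike.mul_mem_graded hx hy
      rwa [hab] at this
    have hn1 : 1 ≤ n := by omega
    -- Rota-Baxter computation
    have h1 : φm x = - R (Φ x - φm x) := hm' a ha x hx
    have h2 : φm y = - R (Φ y - φm y) := hm' b hb y hy
    have h3 : φm (x * y) = - R (Φ (x * y) - φm (x * y)) := hm' n hn1 (x * y) hxy
    have hRu : R (Φ x - φm x) = - φm x := by linear_combination h1
    have hRv : R (Φ y - φm y) = - φm y := by linear_combination h2
    have hkey2 : φm x * φm y = - R (Φ x * Φ y - φm x * φm y) := by
      have e := hRB (Φ x - φm x) (Φ y - φm y)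
      rw [hRu, hRv] at e
      rw [← map_add R, ← map_sub R] at e
      have e3 : (Φ x - φm x) * -φm y + -φm x * (Φ y - φm y)
          - (Φ x - φm x) * (Φ y - φm y) = -(Φ x * Φ y - φm x * φm y) := by ring
      rw [e3, map_neg] at e
      linear_combination e
    have hfin : D x y = - R ((Φ (x * y) - φm (x * y)) - (Φ x * Φ y - φm x * φm y)) := by
      rw [map_sub, hD]
      linear_combination h3 - hkey2
    have harg : (Φ (x * y) - φm (x * y)) - (Φ x * Φ y - φm x * φm y) = 0 := by
      have hk := key1
      rw [hD] at hk
      linear_combination hk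
    rw [harg, map_zero, neg_zero] at hfin
    exact hfin
  -- extend multiplicativity of φm to all elements
  have hDall : ∀ x y : H, D x y = 0 := by
    intro x y
    rw [← DirectSum.sum_support_decompose ℳ x, ← DirectSum.sum_support_decompose ℳ y,
      map_sum]
    refine Finset.sum_eq_zero fun j _ => ?_
    rw [map_sum, LinearMap.sum_apply]
    refine Finset.sum_eq_zero fun i _ => ?_
    exact main (i + j) i j rfl _ (SetLike.coe_mem _) _ (SetLike.coe_mem _)
  have hmmul : ∀ x y : H, φm (x * y) = φm x * φm y := by
    intro x y
    have := hDall x y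
    rw [hD] at this
    linear_combination this
  refine ⟨hmmul, ?_⟩
  -- φp agrees with the convolution Φ
  have hΦ1 : Φ (1 : H) = 1 := by
    rw [hΦ, Bialgebra.comul_one, Algebra.TensorProduct.one_def, hFtmul, hφm1, map_one, one_mul]
  have hpΦ : ∀ z : H, φp z = Φ z := by
    intro z
    rw [← DirectSum.sum_support_decompose ℳ z, map_sum, map_sum]
    refine Finset.sum_congr rfl fun i _ => ?_
    rcases Nat.eq_zero_or_pos i with h0 | h1
    · subst h0
      have hmem0 : ((DirectSum.decompose ℳ z 0 : ℳ 0) : H) ∈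
          Submodule.span k {(1 : H)} := by
        rw [← hconn]; exact SetLike.coe_mem _
      obtain ⟨c, hc⟩ := Submodule.mem_span_singleton.mp hmem0
      rw [← hc, map_smul, map_smul, hφp1, hΦ1]
    · exact hp' i h1 _ (SetLike.coe_mem _)
  -- Φ is multiplicative now that φm is
  have hBzero : ∀ s t : H ⊗[k] H, B s t = 0 := by
    intro s t
    induction s using TensorProduct.induction_on with
    | zero => simp
    | tmul a b =>
        induction t using TensorProduct.induction_on with
        | zero => simp
        | tmul c d =>
            rw [hBtmul, hD, hmmul, sub_self, zero_mul]
        | add t1 t2 ht1 ht2 => rw [map_add, ht1, ht2, add_zero]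
    | add s1 s2 hs1 hs2 => rw [LinearMap.map_add₂, hs1, hs2, add_zero]
  intro x y
  rw [hpΦ, hpΦ, hpΦ, hΦ, hΦ, hΦ, Bialgebra.comul_mul]
  have := hBzero (CoalgebraStruct.comul (R := k) x) (CoalgebraStruct.comul (R := k) y)
  rw [hB] at this
  linear_combination this
end
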